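/- Let a > 1 and let h* ∈ (0, 1) satisfy tanh(a·h*) = h*. Then a·(1 − h*²) < 1. Consequently, for every c ∈ (0, 1], the update map f(h) = (1 − c)·h + c·tanh(a·h) satisfies f'(h*) = 1 − c·(1 − a·(1 − h*²)) < 1, and for c ∈ (0, 1) also f'(h*) > 0; hence the nonzero equilibria ±h* of the recurrent unit are stable. -/

import Mathlib

lemma my_hasDerivAt_tanh (x : ℝ) :
    HasDerivAt Real.tanh (1 - Real.tanh x ^ 2) x := by
  have hc := Real.cosh_pos x
  have h := (Real.hasDerivAt_sinh x).div (Real.hasDerivAt_cosh x) hc.ne'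
  have hfun : (Real.sinh / Real.cosh) = Real.tanh := by
    funext y; rw [Pi.div_apply, Real.tanh_eq_sinh_div_cosh]
  rw [hfun] at h
  refine h.congr_deriv ?_
  have h1 : Real.cosh x ^ 2 - Real.sinh x ^ 2 = 1 := Real.cosh_sq_sub_sinh_sq x
  rw [Real.tanh_eq_sinh_div_cosh]
  field_simp

theorem nonzero_equilibria_stable (a hstar : ℝ) (ha : 1 < a)
    (hpos : 0 < hstar) (hlt : hstar < 1)
    (hfix : Real.tanh (a * hstar) = hstar) :
    a * (1 - hstar ^ 2) < 1 ∧
    (∀ c : ℝ, 0 < c → c ≤ 1 →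
      ∀ f : ℝ → ℝ, (∀ h, f h = (1 - c) * h + c * Real.tanh (a * h)) →
        HasDerivAt f (1 - c * (1 - a * (1 - hstar ^ 2))) hstar ∧
        1 - c * (1 - a * (1 - hstar ^ 2)) < 1 ∧
        (c < 1 → 0 < 1 - c * (1 - a * (1 - hstar ^ 2)))) := by
  set y := a * hstar with hy
  have hypos : 0 < y := by positivity
  have hc := Real.cosh_pos y
  have hs := Real.sinh_pos_iff.mpr hypos
  have hsq : Real.cosh y ^ 2 - Real.sinh y ^ 2 = 1 := Real.cosh_sq_sub_sinh_sq y
  have htanh : Real.sinh y / Real.cosh y = hstar := by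
    rw [← Real.tanh_eq_sinh_div_cosh]; exact hfix
  have hsinh : Real.sinh y = hstar * Real.cosh y := by
    field_simp at htanh; linarith [htanh]
  -- sinh(2y) > 2y
  have h2y : 2 * y < Real.sinh (2 * y) := Real.self_lt_sinh_iff.mpr (by linarith)
  have hsinh2 : Real.sinh (2 * y) = 2 * Real.sinh y * Real.cosh y := Real.sinh_two_mul y
  -- cosh² y > a
  have hcosh2 : a < Real.cosh y ^ 2 := by
    have h1 : 2 * (a * hstar) < 2 * Real.sinh y * Real.cosh y := by
      rw [← hsinh2]; exact h2y
    rw [hsinh] at h1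
    nlinarith [hc]
  have honem : 1 - hstar ^ 2 = 1 / Real.cosh y ^ 2 := by
    have : hstar ^ 2 = Real.sinh y ^ 2 / Real.cosh y ^ 2 := by
      rw [hsinh]; field_simp
    rw [this]; field_simp; exact hsq
  have hmain : a * (1 - hstar ^ 2) < 1 := by
    rw [honem, mul_one_div, div_lt_one (by positivity)]
    exact hcosh2
  have hpos2 : 0 < a * (1 - hstar ^ 2) := by nlinarith
  refine ⟨hmain, fun c hc0 hc1 f hf => ?_⟩
  constructor
  · have hd1 : HasDerivAt (fun h : ℝ => Real.tanh (a * h))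
        ((1 - Real.tanh (a * hstar) ^ 2) * a) hstar := by
      have := (my_hasDerivAt_tanh (a * hstar)).comp hstar
        ((hasDerivAt_id hstar).const_mul a)
      simpa [mul_comm, Function.comp_def] using this
    have hd : HasDerivAt (fun h : ℝ => (1 - c) * h + c * Real.tanh (a * h))
        ((1 - c) * 1 + c * ((1 - Real.tanh (a * hstar) ^ 2) * a)) hstar :=
      ((hasDerivAt_id hstar).const_mul (1 - c)).add (hd1.const_mul c)
    have heq : (fun h : ℝ => (1 - c) * h + c * Real.tanh (a * h)) = f := by
      funext h; rw [hf h]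
    rw [heq, hfix] at hd
    convert hd using 1; ring
  constructor
  · nlinarith
  · intro hclt; nlinarith
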